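/- Let X be a uniformly convex Banach space and {φ_n} nonzero functionals in X* with φ_n → φ ≠ 0. If x̃_n is the unique minimal-norm element with φ_n(x̃_n) = 1, and x̃ is the minimal-norm element with φ(x̃) = 1, then x̃_n → x̃ in norm. -/

import Mathlib

open Filter

/-- The minimal-norm element with `ψ x = 1` has norm `1 / ‖ψ‖`. -/
lemma min_norm_elt_norm {X : Type*} [NormedAddCommGroup X] [NormedSpace ℂ X]
    (ψ : X →L[ℂ] ℂ) (hψ : ψ ≠ 0) (x : X) (h1 : ψ x = 1)
    (hmin : ∀ y : X, ψ y = 1 → ‖x‖ ≤ ‖y‖) : ‖x‖ = 1 / ‖ψ‖ := by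
  have hx0 : x ≠ 0 := by
    intro h; rw [h, map_zero] at h1; exact one_ne_zero h1.symm
  have hxpos : (0:ℝ) < ‖x‖ := norm_pos_iff.mpr hx0
  have hψpos : (0:ℝ) < ‖ψ‖ := norm_pos_iff.mpr hψ
  have hub : ‖ψ‖ ≤ 1 / ‖x‖ := by
    apply ContinuousLinearMap.opNorm_le_bound _ (by positivity)
    intro u
    by_cases hu : ψ u = 0
    · rw [hu]; simp; positivity
    · have hy : ψ ((ψ u)⁻¹ • u) = 1 := by
        rw [map_smul]; simp [inv_mul_cancel₀ hu]
      have hle := hmin _ hy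
      rw [norm_smul, norm_inv] at hle
      have hψu : (0:ℝ) < ‖ψ u‖ := norm_pos_iff.mpr hu
      have h2 : ‖x‖ * ‖ψ u‖ ≤ ‖u‖ := by
        calc ‖x‖ * ‖ψ u‖ ≤ ‖ψ u‖⁻¹ * ‖u‖ * ‖ψ u‖ := by gcongr
          _ = ‖u‖ := by
            rw [mul_comm, ← mul_assoc, mul_inv_cancel₀ hψu.ne', one_mul]
      rw [div_mul_eq_mul_div, le_div_iff₀ hxpos, one_mul, mul_comm]
      exact h2
  have hlb : 1 ≤ ‖ψ‖ * ‖x‖ := by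
    calc (1:ℝ) = ‖ψ x‖ := by rw [h1]; simp
      _ ≤ ‖ψ‖ * ‖x‖ := ψ.le_opNorm x
  rw [eq_div_iff hψpos.ne']
  have h3 : ‖ψ‖ * ‖x‖ ≤ 1 := by
    have := mul_le_mul_of_nonneg_right hub hxpos.le
    rwa [one_div, inv_mul_cancel₀ hxpos.ne'] at this
  rw [mul_comm]
  linarith

theorem min_norm_element_continuity
    {X : Type*} [NormedAddCommGroup X] [NormedSpace ℂ X]
    [UniformConvexSpace X] [CompleteSpace X]
    (φn : ℕ → (X →L[ℂ] ℂ)) (φ : X →L[ℂ] ℂ)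
    (hφn : ∀ n, φn n ≠ 0) (hφ : φ ≠ 0)
    (hconv : Filter.Tendsto φn Filter.atTop (nhds φ))
    (xtiln : ℕ → X) (xtil : X)
    (hxtiln : ∀ n, φn n (xtiln n) = 1 ∧ ∀ y : X, φn n y = 1 → ‖xtiln n‖ ≤ ‖y‖)
    (hxtil : φ xtil = 1 ∧ ∀ y : X, φ y = 1 → ‖xtil‖ ≤ ‖y‖) :
    Filter.Tendsto xtiln Filter.atTop (nhds xtil) := by
  have hφpos : (0:ℝ) < ‖φ‖ := norm_pos_iff.mpr hφ
  have hn : ∀ n, ‖xtiln n‖ = 1 / ‖φn n‖ := fun n =>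
    min_norm_elt_norm (φn n) (hφn n) _ (hxtiln n).1 (hxtiln n).2
  have hx : ‖xtil‖ = 1 / ‖φ‖ := min_norm_elt_norm φ hφ _ hxtil.1 hxtil.2
  have hrpos : (0:ℝ) < ‖xtil‖ := by rw [hx]; positivity
  -- norms converge
  have hφnorm : Tendsto (fun n => ‖φn n‖) atTop (nhds ‖φ‖) := hconv.norm
  have hRlim : Tendsto (fun n => ‖xtiln n‖) atTop (nhds ‖xtil‖) := by
    have h0 : Tendsto (fun n => 1 / ‖φn n‖) atTop (nhds (1 / ‖φ‖)) :=
      tendsto_const_nhds.div hφnorm hφpos.ne'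
    rw [hx]
    simpa only [hn] using h0
  -- φ (xtiln n) → 1
  have hdiff : Tendsto (fun n => ‖φ - φn n‖) atTop (nhds 0) := by
    have := tendsto_iff_norm_sub_tendsto_zero.mp hconv
    simpa [norm_sub_rev] using this
  have hφx : Tendsto (fun n => φ (xtiln n)) atTop (nhds 1) := by
    rw [show (1:ℂ) = 0 + 1 by ring]
    have key : Tendsto (fun n => φ (xtiln n) - 1) atTop (nhds 0) := by
      refine squeeze_zero_norm (fun n => ?_)
        (show Tendsto (fun n => ‖φ - φn n‖ * ‖xtiln n‖) atTop (nhds 0) from ?_)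
      · have h1 : φ (xtiln n) - 1 = (φ - φn n) (xtiln n) := by
          rw [ContinuousLinearMap.sub_apply, (hxtiln n).1]
        rw [h1]
        exact (φ - φn n).le_opNorm _
      · have := hdiff.mul hRlim
        simpa using this
    have := key.add (tendsto_const_nhds (x := (1:ℂ)))
    simpa using this
  -- ‖xtiln n + xtil‖ → 2‖xtil‖
  have hsum : Tendsto (fun n => ‖xtiln n + xtil‖) atTop (nhds (2 * ‖xtil‖)) := by
    apply tendsto_of_tendsto_of_tendsto_of_le_of_le
      (g := fun n => ‖φ (xtiln n) + 1‖ / ‖φ‖) (h := fun n => ‖xtiln n‖ + ‖xtil‖)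
    · have h1 : Tendsto (fun n => ‖φ (xtiln n) + 1‖) atTop (nhds ‖(1:ℂ) + 1‖) :=
        ((hφx.add tendsto_const_nhds).norm)
      have h2 : Tendsto (fun n => ‖φ (xtiln n) + 1‖ / ‖φ‖) atTop
          (nhds (‖(1:ℂ) + 1‖ / ‖φ‖)) := h1.div tendsto_const_nhds hφpos.ne'
      have h3 : ‖(1:ℂ) + 1‖ / ‖φ‖ = 2 * ‖xtil‖ := by
        rw [hx]
        norm_num
        rw [div_eq_mul_inv]
      rwa [h3] at h2
    · have := hRlim.add (tendsto_const_nhds (x := ‖xtil‖))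
      rwa [two_mul]
    · intro n
      rw [div_le_iff₀ hφpos]
      have h1 : ‖φ (xtiln n) + 1‖ = ‖φ (xtiln n + xtil)‖ := by
        rw [map_add, hxtil.1]
      rw [h1, mul_comm]
      exact φ.le_opNorm _
    · intro n; exact norm_add_le _ _
  -- normalized vectors
  have hRpos : ∀ n, (0:ℝ) < ‖xtiln n‖ := by
    intro n
    rw [hn n]
    have := norm_pos_iff.mpr (hφn n)
    positivity
  set u : ℕ → X := fun n => (‖xtiln n‖)⁻¹ • xtiln n with hu
  set v : X := (‖xtil‖)⁻¹ • xtil with hv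
  have hunorm : ∀ n, ‖u n‖ = 1 := by
    intro n
    rw [hu]
    simp only [norm_smul, norm_inv, norm_norm]
    exact inv_mul_cancel₀ (hRpos n).ne'
  have hvnorm : ‖v‖ = 1 := by
    rw [hv]
    simp only [norm_smul, norm_inv, norm_norm]
    exact inv_mul_cancel₀ hrpos.ne'
  -- error term
  have herr : Tendsto (fun n => |(‖xtiln n‖)⁻¹ - (‖xtil‖)⁻¹| * ‖xtiln n‖) atTop (nhds 0) := by
    have h1 : Tendsto (fun n => (‖xtiln n‖)⁻¹ - (‖xtil‖)⁻¹) atTop (nhds 0) := by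
      have := (hRlim.inv₀ hrpos.ne').sub (tendsto_const_nhds (x := (‖xtil‖)⁻¹))
      simpa using this
    have := (h1.abs).mul hRlim
    simpa using this
  have hdecomp : ∀ n, u n + v
      = (‖xtil‖)⁻¹ • (xtiln n + xtil) + ((‖xtiln n‖)⁻¹ - (‖xtil‖)⁻¹) • xtiln n := by
    intro n
    rw [hu, hv, smul_add, sub_smul]
    abel
  -- ‖u n + v‖ → 2
  have huv : Tendsto (fun n => ‖u n + v‖) atTop (nhds 2) := by
    apply tendsto_of_tendsto_of_tendsto_of_le_of_le
      (g := fun n => (‖xtil‖)⁻¹ * ‖xtiln n + xtil‖ - |(‖xtiln n‖)⁻¹ - (‖xtil‖)⁻¹| * ‖xtiln n‖)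
      (h := fun n => (‖xtil‖)⁻¹ * ‖xtiln n + xtil‖ + |(‖xtiln n‖)⁻¹ - (‖xtil‖)⁻¹| * ‖xtiln n‖)
    · have h1 := (tendsto_const_nhds (x := (‖xtil‖)⁻¹)).mul hsum
      have h2 := h1.sub herr
      have h3 : (‖xtil‖)⁻¹ * (2 * ‖xtil‖) - 0 = 2 := by field_simp; ring
      rwa [h3] at h2
    · have h1 := (tendsto_const_nhds (x := (‖xtil‖)⁻¹)).mul hsum
      have h2 := h1.add herr
      have h3 : (‖xtil‖)⁻¹ * (2 * ‖xtil‖) + 0 = 2 := by field_simp; ring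
      rwa [h3] at h2
    · intro n
      have hb : ‖(‖xtil‖)⁻¹ • (xtiln n + xtil)‖ = (‖xtil‖)⁻¹ * ‖xtiln n + xtil‖ := by
        rw [norm_smul, Real.norm_eq_abs, abs_of_pos (by positivity)]
      have hc : ‖((‖xtiln n‖)⁻¹ - (‖xtil‖)⁻¹) • xtiln n‖
          = |(‖xtiln n‖)⁻¹ - (‖xtil‖)⁻¹| * ‖xtiln n‖ := by
        rw [norm_smul, Real.norm_eq_abs]
      have htri : ‖(‖xtil‖)⁻¹ • (xtiln n + xtil)‖
          ≤ ‖(‖xtil‖)⁻¹ • (xtiln n + xtil) + ((‖xtiln n‖)⁻¹ - (‖xtil‖)⁻¹) • xtiln n‖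
            + ‖((‖xtiln n‖)⁻¹ - (‖xtil‖)⁻¹) • xtiln n‖ := by
        have h := norm_add_le
          ((‖xtil‖)⁻¹ • (xtiln n + xtil) + ((‖xtiln n‖)⁻¹ - (‖xtil‖)⁻¹) • xtiln n)
          (-(((‖xtiln n‖)⁻¹ - (‖xtil‖)⁻¹) • xtiln n))
        simpa [add_neg_cancel_right] using h
      dsimp only
      rw [hdecomp n]
      calc (‖xtil‖)⁻¹ * ‖xtiln n + xtil‖ - |(‖xtiln n‖)⁻¹ - (‖xtil‖)⁻¹| * ‖xtiln n‖
          = ‖(‖xtil‖)⁻¹ • (xtiln n + xtil)‖ - ‖((‖xtiln n‖)⁻¹ - (‖xtil‖)⁻¹) • xtiln n‖ := by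
            rw [hb, hc]
        _ ≤ _ := by linarith
    · intro n
      dsimp only
      rw [hdecomp n]
      calc ‖(‖xtil‖)⁻¹ • (xtiln n + xtil) + ((‖xtiln n‖)⁻¹ - (‖xtil‖)⁻¹) • xtiln n‖
          ≤ ‖(‖xtil‖)⁻¹ • (xtiln n + xtil)‖ + ‖((‖xtiln n‖)⁻¹ - (‖xtil‖)⁻¹) • xtiln n‖ :=
            norm_add_le _ _
        _ = (‖xtil‖)⁻¹ * ‖xtiln n + xtil‖ + |(‖xtiln n‖)⁻¹ - (‖xtil‖)⁻¹| * ‖xtiln n‖ := by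
            rw [norm_smul, norm_smul, Real.norm_eq_abs, Real.norm_eq_abs,
              abs_of_pos (inv_pos.mpr hrpos)]
  -- u n - v → 0 by uniform convexity
  have huvsub : Tendsto (fun n => u n - v) atTop (nhds 0) := by
    rw [NormedAddCommGroup.tendsto_nhds_zero]
    intro ε hε
    obtain ⟨δ, hδ, hδ'⟩ := exists_forall_closed_ball_dist_add_le_two_sub X hε
    have hev : ∀ᶠ n in atTop, 2 - δ < ‖u n + v‖ :=
      huv.eventually (eventually_gt_nhds (by linarith))
    filter_upwards [hev] with n hn2
    by_contra hcon
    push_neg at hcon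
    have := hδ' (le_of_eq (hunorm n)) (le_of_eq hvnorm) hcon
    linarith
  -- conclude
  have hfinal : Tendsto (fun n => xtiln n - xtil) atTop (nhds 0) := by
    have hre : ∀ n, xtiln n - xtil = ‖xtiln n‖ • (u n - v) + (‖xtiln n‖ - ‖xtil‖) • v := by
      intro n
      rw [hu, hv, smul_sub, smul_inv_smul₀ (hRpos n).ne', sub_smul,
        smul_inv_smul₀ hrpos.ne']
      abel
    have h1 : Tendsto (fun n => ‖xtiln n‖ • (u n - v)) atTop (nhds ((‖xtil‖ : ℝ) • (0:X))) :=
      hRlim.smul huvsub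
    have h2 : Tendsto (fun n => (‖xtiln n‖ - ‖xtil‖) • v) atTop (nhds ((0:ℝ) • v)) := by
      apply Tendsto.smul _ tendsto_const_nhds
      have := hRlim.sub (tendsto_const_nhds (x := ‖xtil‖))
      simpa using this
    have h3 := h1.add h2
    simp only [smul_zero, zero_smul, add_zero] at h3
    convert h3 using 1
    funext n
    exact hre n
  rwa [← tendsto_sub_nhds_zero_iff]
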